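/- For every instance with two agents having equal entitlements, nonempty signal sets S₁, S₂, and valuations v₁, v₂ : (S₁×S₂) × 2^M → ℝ≥0 that are monotone and normalized in the set argument for every fixed signal vector, there exists an allocation mechanism 𝓜 (with some bid sets B₁, B₂) such that for every true signal vector s ∈ S₁×S₂ there exists a report vector ((r₁,b₁),(r₂,b₂)) that: (1) is a pure Nash equilibrium; (2) induces an allocation that gives agent 1 at least her MMS with respect to s and is EFX for agent 1 with respect to s; and (3) is EF for agent 2 with respect to s. -/

import Mathlib

/-- The maximin share of a valuation `v` on subsets of a finite set `M`,
for two agents with equal entitlements: `MMS(v) = max_{T ⊆ M} min (v T) (v Tᶜ)`. -/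
noncomputable def mms2 {M : Type*} [Fintype M] [DecidableEq M] (v : Finset M → ℝ) : ℝ :=
  (Finset.univ : Finset (Finset M)).sup' ⟨∅, Finset.mem_univ ∅⟩ fun T => min (v T) (v Tᶜ)

private lemma lex_fst {a c : ℝ} {b d : ℕ} (h : toLex (a, b) ≤ toLex (c, d)) : a ≤ c := by
  rcases Prod.Lex.le_iff.1 h with h' | ⟨h', -⟩
  exacts [le_of_lt h', le_of_eq h']

private lemma lex_snd {a c : ℝ} {b d : ℕ} (h : toLex (a, b) ≤ toLex (c, d)) (he : a = c) :
    b ≤ d := by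
  rcases Prod.Lex.le_iff.1 h with h' | ⟨-, h'⟩
  · exact absurd h' (by rw [he] at *; exact lt_irrefl c)
  · exact h'

private lemma exists_leximin_cut {M : Type*} [Fintype M] [DecidableEq M]
    (v : Finset M → ℝ) (hmono : ∀ T T' : Finset M, T ⊆ T' → v T ≤ v T') :
    ∃ X : Finset M, v X ≤ v Xᶜ ∧ (∀ T : Finset M, min (v T) (v Tᶜ) ≤ v X) ∧
      ∀ j ∈ Xᶜ, v (Xᶜ \ {j}) ≤ v X := by
  classical
  obtain ⟨X₀, -, hX₀⟩ := Finset.exists_max_image (Finset.univ : Finset (Finset M))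
    (fun T => toLex (min (v T) (v Tᶜ), if v T ≤ v Tᶜ then T.card else Tᶜ.card))
    ⟨∅, Finset.mem_univ ∅⟩
  simp only [Finset.mem_univ, forall_true_left] at hX₀
  have key : ∃ X : Finset M, v X ≤ v Xᶜ ∧ ∀ T : Finset M,
      toLex (min (v T) (v Tᶜ), if v T ≤ v Tᶜ then T.card else Tᶜ.card) ≤
      toLex (min (v X) (v Xᶜ), if v X ≤ v Xᶜ then X.card else Xᶜ.card) := by
    rcases le_or_gt (v X₀) (v X₀ᶜ) with h | h
    · exact ⟨X₀, h, hX₀⟩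
    · refine ⟨X₀ᶜ, by rw [compl_compl]; exact h.le, fun T => (hX₀ T).trans_eq ?_⟩
      rw [compl_compl, min_comm, if_neg (not_le.mpr h), if_pos h.le]
  obtain ⟨X, hle, hmax⟩ := key
  have hfirst : ∀ T, min (v T) (v Tᶜ) ≤ v X := by
    intro T
    have h2 := lex_fst (hmax T)
    rwa [min_eq_left hle] at h2
  refine ⟨X, hle, hfirst, ?_⟩
  intro j hj
  by_contra hcon
  push_neg at hcon
  have hjX : j ∉ X := Finset.mem_compl.mp hj
  have hXc : (insert j X)ᶜ = Xᶜ \ {j} := by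
    rw [Finset.compl_insert, Finset.erase_eq]
  have hvX' : v X ≤ v (insert j X) := hmono _ _ (Finset.subset_insert _ _)
  rcases lt_or_eq_of_le hvX' with h | h
  · have h1 : v X < min (v (insert j X)) (v (insert j X)ᶜ) := by
      rw [hXc]; exact lt_min h hcon
    have h2 := hfirst (insert j X)
    exact absurd (h1.trans_le h2) (lt_irrefl _)
  · have hins : v (insert j X) = v X := h.symm
    have hc1 : v (insert j X) ≤ v (insert j X)ᶜ := by rw [hXc, hins]; exact hcon.le
    have hfeq : min (v (insert j X)) (v (insert j X)ᶜ) = min (v X) (v Xᶜ) := by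
      rw [hXc, hins, min_eq_left hcon.le, min_eq_left hle]
    have hsnd := lex_snd (hmax (insert j X)) hfeq
    rw [if_pos hc1, if_pos hle, Finset.card_insert_of_notMem hjX] at hsnd
    omega

/-- For every instance with two agents having equal entitlements, nonempty signal sets
`S₁, S₂`, and interdependent valuations `v₁, v₂` monotone and normalized (nonnegative)
in the set argument, there exist bid sets `B₁, B₂` and an allocation mechanism `𝓜`
(where `𝓜 (r₁,b₁) (r₂,b₂)` is agent 2's bundle `A₂`, and agent 1 gets `A₁ = A₂ᶜ`)
such that for every true signal vector `(s₁,s₂)` there is a report vector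
`((r₁,b₁),(r₂,b₂))` that (1) is a pure Nash equilibrium, (2) gives agent 1 at least
her MMS w.r.t. `(s₁,s₂)` and is EFX for agent 1 w.r.t. `(s₁,s₂)`, and (3) is EF for
agent 2 w.r.t. `(s₁,s₂)`. -/
theorem exists_fair_PNE_mechanism_equal_entitlements.{u}
    {M : Type*} [Fintype M] [DecidableEq M] {S1 S2 : Type u}
    [Nonempty S1] [Nonempty S2]
    (v1 v2 : S1 × S2 → Finset M → ℝ)
    (h1mono : ∀ (σ : S1 × S2) (T T' : Finset M), T ⊆ T' → v1 σ T ≤ v1 σ T')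
    (h1norm : ∀ σ : S1 × S2, v1 σ ∅ = 0)
    (h1nonneg : ∀ (σ : S1 × S2) (T : Finset M), 0 ≤ v1 σ T)
    (h2mono : ∀ (σ : S1 × S2) (T T' : Finset M), T ⊆ T' → v2 σ T ≤ v2 σ T')
    (h2norm : ∀ σ : S1 × S2, v2 σ ∅ = 0)
    (h2nonneg : ∀ (σ : S1 × S2) (T : Finset M), 0 ≤ v2 σ T) :
    ∃ (B1 B2 : Type u) (𝓜 : S1 × B1 → S2 × B2 → Finset M),
      ∀ (s1 : S1) (s2 : S2),
        ∃ (r1 : S1) (b1 : B1) (r2 : S2) (b2 : B2),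
          -- (1) `((r1,b1),(r2,b2))` is a pure Nash equilibrium w.r.t. `(s1,s2)`
          (∀ (r1' : S1) (b1' : B1),
              v1 (s1, r2) ((𝓜 (r1', b1') (r2, b2))ᶜ) ≤
                v1 (s1, r2) ((𝓜 (r1, b1) (r2, b2))ᶜ)) ∧
          (∀ (r2' : S2) (b2' : B2),
              v2 (r1, s2) (𝓜 (r1, b1) (r2', b2')) ≤
                v2 (r1, s2) (𝓜 (r1, b1) (r2, b2))) ∧
          -- (2) agent 1 gets at least her MMS, and the allocation is EFX for agent 1
          mms2 (v1 (s1, s2)) ≤ v1 (s1, s2) ((𝓜 (r1, b1) (r2, b2))ᶜ) ∧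
          (∀ j ∈ 𝓜 (r1, b1) (r2, b2),
              v1 (s1, s2) (𝓜 (r1, b1) (r2, b2) \ {j}) ≤
                v1 (s1, s2) ((𝓜 (r1, b1) (r2, b2))ᶜ)) ∧
          -- (3) the allocation is EF for agent 2
          v2 (s1, s2) ((𝓜 (r1, b1) (r2, b2))ᶜ) ≤
            v2 (s1, s2) (𝓜 (r1, b1) (r2, b2)) := by
  classical
  -- bid sets: agent 1 bids a cut (a subset of M), agent 2 bids a choice function,
  -- both encoded as `Fin` so they live in `Type u`.
  set e1 := Fintype.equivFin (Finset M) with he1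
  set e2 := Fintype.equivFin (Finset M → Bool) with he2
  refine ⟨ULift.{u} (Fin (Fintype.card (Finset M))),
          ULift.{u} (Fin (Fintype.card (Finset M → Bool))),
          fun p q =>
            cond (e2.symm q.2.down (e1.symm p.2.down)) (e1.symm p.2.down) (e1.symm p.2.down)ᶜ,
          ?_⟩
  intro s1 s2
  obtain ⟨X, hle, hmin, hefx⟩ := exists_leximin_cut (v1 (s1, s2)) (h1mono (s1, s2))
  set c : Bool := decide (v2 (s1, s2) Xᶜ ≤ v2 (s1, s2) X) with hc
  set f : Finset M → Bool :=
    fun T => if T = X then c else decide (v1 (s1, s2) Tᶜ ≤ v1 (s1, s2) T) with hf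
  refine ⟨s1, ⟨e1 X⟩, s2, ⟨e2 f⟩, ?_, ?_, ?_, ?_, ?_⟩ <;>
    simp only [Equiv.symm_apply_apply]
  · -- PNE for agent 1
    intro r1' b1'
    set T := e1.symm b1'.down with hT
    by_cases hTX : T = X
    · rw [hTX]
    · have hfT : f T = decide (v1 (s1, s2) Tᶜ ≤ v1 (s1, s2) T) := by
        rw [hf]; simp [hTX]
      have hA1 : v1 (s1, s2) X ≤ v1 (s1, s2) ((cond (f X) X Xᶜ)ᶜ) := by
        have hfX : f X = c := by rw [hf]; simp
        rw [hfX]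
        cases hcc : c
        · simp [compl_compl]
        · simpa using hle
      have hbound : v1 (s1, s2) ((cond (f T) T Tᶜ)ᶜ) ≤ v1 (s1, s2) X := by
        rcases le_or_gt (v1 (s1, s2) Tᶜ) (v1 (s1, s2) T) with hvt | hvt
        · rw [hfT, decide_eq_true hvt]
          simp only [cond_true]
          exact le_trans (le_of_eq (min_eq_right hvt).symm) (hmin T)
        · rw [hfT, decide_eq_false (not_le.mpr hvt)]
          simp only [cond_false, compl_compl]
          exact (le_of_eq (min_eq_left hvt.le).symm).trans (hmin T)
      exact hbound.trans hA1
  · -- PNE for agent 2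
    intro r2' b2'
    set g := e2.symm b2'.down with hg
    have hfX : f X = c := by rw [hf]; simp
    rw [hfX]
    have hbest : ∀ b : Bool, v2 (s1, s2) (cond b X Xᶜ) ≤ v2 (s1, s2) (cond c X Xᶜ) := by
      intro b
      by_cases hvv : v2 (s1, s2) Xᶜ ≤ v2 (s1, s2) X
      · have hcc : c = true := by rw [hc]; exact decide_eq_true hvv
        rw [hcc]
        cases b <;> simp [hvv]
      · have hcc : c = false := by rw [hc]; exact decide_eq_false hvv
        rw [hcc]
        cases b <;> simp [le_of_not_ge hvv]
    exact hbest (g X)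
  · -- MMS for agent 1
    have hfX : f X = c := by rw [hf]; simp
    rw [hfX]
    have hA1 : v1 (s1, s2) X ≤ v1 (s1, s2) ((cond c X Xᶜ)ᶜ) := by
      cases hcc : c
      · simp [compl_compl]
      · simpa using hle
    refine (Finset.sup'_le _ _ fun T _ => ?_).trans hA1
    exact hmin T
  · -- EFX for agent 1
    have hfX : f X = c := by rw [hf]; simp
    rw [hfX]
    intro j hj
    by_cases hvv : v2 (s1, s2) Xᶜ ≤ v2 (s1, s2) X
    · have hcc : c = true := by rw [hc]; exact decide_eq_true hvv
      rw [hcc] at hj ⊢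
      simp only [cond_true] at hj ⊢
      have h1 : v1 (s1, s2) (X \ {j}) ≤ v1 (s1, s2) X :=
        h1mono _ _ _ (Finset.sdiff_subset)
      exact h1.trans hle
    · have hcc : c = false := by rw [hc]; exact decide_eq_false hvv
      rw [hcc] at hj ⊢
      simp only [cond_false, compl_compl] at hj ⊢
      exact hefx j hj
  · -- EF for agent 2
    have hfX : f X = c := by rw [hf]; simp
    rw [hfX]
    by_cases hvv : v2 (s1, s2) Xᶜ ≤ v2 (s1, s2) X
    · have hcc : c = true := by rw [hc]; exact decide_eq_true hvv
      rw [hcc]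
      simpa using hvv
    · have hcc : c = false := by rw [hc]; exact decide_eq_false hvv
      rw [hcc]
      simp only [cond_false, compl_compl]
      exact le_of_not_ge hvv
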